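/- arXiv:1912.10121 — 3 statements merged into one kernel-verified Lean document; each statement's English description precedes it below -/
import Mathlib

section
/- Let h : ℝ² → ℝ and let η(y) = ℰh(y) be its harmonic extension to the lower half-space ℝ³₋. If the sup-norm of ∇η over ℝ³₋ is bounded by a constant c₀ with 0 < c₀ < 1/2, then the map Θ(y) = (y₁, y₂, y₃ + η(y)) is a bijection from ℝ³₋ = {y ∈ ℝ³ : y₃ < 0} onto the region Ω = {x ∈ ℝ³ : x₃ < h(x₁,x₂)}. -/
open Set

/-- If the harmonic extension `η` of `h` to the lower half-space has sup-norm of its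
gradient bounded by `c₀ < 1/2`, then the Hanzawa map
`Θ(y) = (y₁, y₂, y₃ + η(y))` is a bijection from `ℝ³₋` onto `Ω = {x₃ < h(x₁,x₂)}`. -/
theorem stmt_0 (h : ℝ → ℝ → ℝ) (η : (Fin 3 → ℝ) → ℝ) (c₀ : ℝ)
    (hc₀ : 0 < c₀) (hc₀' : c₀ < 1 / 2)
    (hreg : ContDiffOn ℝ 1 η {y : Fin 3 → ℝ | y 2 ≤ 0})
    (hgrad : ∀ y ∈ {y : Fin 3 → ℝ | y 2 ≤ 0},
      ‖fderivWithin ℝ η {y : Fin 3 → ℝ | y 2 ≤ 0} y‖ ≤ c₀)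
    (htrace : ∀ y : Fin 3 → ℝ, y 2 = 0 → η y = h (y 0) (y 1)) :
    Set.BijOn (fun y : Fin 3 → ℝ => Function.update y 2 (y 2 + η y))
      {y : Fin 3 → ℝ | y 2 < 0}
      {x : Fin 3 → ℝ | x 2 < h (x 0) (x 1)} := by
  set S : Set (Fin 3 → ℝ) := {y : Fin 3 → ℝ | y 2 ≤ 0} with hS
  have hconv : Convex ℝ S :=
    convex_halfSpace_le ⟨fun a b => rfl, fun c a => rfl⟩ 0
  have hdiff : DifferentiableOn ℝ η S := hreg.differentiableOn one_ne_zero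
  have hlip : ∀ u ∈ S, ∀ v ∈ S, |η v - η u| ≤ c₀ * ‖v - u‖ := fun u hu v hv =>
    hconv.norm_image_sub_le_of_norm_fderivWithin_le hdiff hgrad hu hv
  -- norm of difference of updates
  have hnorm : ∀ (y' : Fin 3 → ℝ) (s t : ℝ),
      ‖Function.update y' 2 t - Function.update y' 2 s‖ ≤ |t - s| := by
    intro y' s t
    apply (pi_norm_le_iff_of_nonneg (abs_nonneg _)).2
    intro i
    rcases eq_or_ne i 2 with rfl | hi
    · simp [Function.update_self]
    · simp [Function.update_of_ne hi]
  have hmemS : ∀ (y' : Fin 3 → ℝ) (t : ℝ), t ≤ 0 → Function.update y' 2 t ∈ S := by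
    intro y' t ht; simpa [hS, Function.update_self] using ht
  -- strict monotonicity of t ↦ t + η (update y' 2 t) on Iic 0
  have hmono : ∀ (y' : Fin 3 → ℝ) (s t : ℝ), s ≤ 0 → t ≤ 0 → s < t →
      s + η (Function.update y' 2 s) < t + η (Function.update y' 2 t) := by
    intro y' s t hs ht hst
    have h1 := hlip _ (hmemS y' s hs) _ (hmemS y' t ht)
    have h2 := (hnorm y' s t)
    have h3 : |t - s| = t - s := abs_of_pos (by linarith)
    have h4 : |η (Function.update y' 2 t) - η (Function.update y' 2 s)| ≤ c₀ * (t - s) := by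
      calc |η (Function.update y' 2 t) - η (Function.update y' 2 s)|
          ≤ c₀ * ‖Function.update y' 2 t - Function.update y' 2 s‖ := h1
        _ ≤ c₀ * (t - s) := by
            rw [← h3]; exact mul_le_mul_of_nonneg_left h2 hc₀.le
    have h5 := (abs_le.1 h4).1
    nlinarith
  refine ⟨?_, ?_, ?_⟩
  · -- MapsTo
    intro y hy
    simp only [mem_setOf_eq] at hy ⊢
    have h0 : Function.update y 2 (y 2 + η y) 2 = y 2 + η y := Function.update_self _ _ _
    have h1 : Function.update y 2 (y 2 + η y) 0 = y 0 := Function.update_of_ne (by decide) _ _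
    have h2 : Function.update y 2 (y 2 + η y) 1 = y 1 := Function.update_of_ne (by decide) _ _
    rw [h0, h1, h2]
    have key := hmono y (y 2) 0 hy.le le_rfl hy
    rw [Function.update_eq_self] at key
    have htr : η (Function.update y 2 0) = h (y 0) (y 1) := by
      have := htrace (Function.update y 2 0) (Function.update_self _ _ _)
      simpa [Function.update_of_ne] using this
    linarith [key, htr.symm.le]
  · -- InjOn
    intro y hy z hz hyz
    simp only [mem_setOf_eq] at hy hz
    have e0 : y 0 = z 0 := by
      have := congrFun hyz 0
      simpa [Function.update_of_ne] using this
    have e1 : y 1 = z 1 := by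
      have := congrFun hyz 1
      simpa [Function.update_of_ne] using this
    have e2 : y 2 + η y = z 2 + η z := by
      have := congrFun hyz 2
      simpa [Function.update_self] using this
    have hzeq : ∀ t : ℝ, Function.update y 2 t = Function.update z 2 t := by
      intro t; funext i
      fin_cases i
      · simp [Function.update_of_ne, e0]
      · simp [Function.update_of_ne, e1]
      · simp [Function.update_self]
    have e2' : y 2 = z 2 := by
      by_contra hne
      rcases lt_or_gt_of_ne hne with hlt | hgt
      · have := hmono y (y 2) (z 2) hy.le hz.le hlt
        rw [Function.update_eq_self, hzeq, Function.update_eq_self] at this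
        linarith
      · have := hmono y (z 2) (y 2) hz.le hy.le hgt
        rw [Function.update_eq_self, hzeq, Function.update_eq_self] at this
        linarith
    funext i
    fin_cases i <;> [exact e0; exact e1; exact e2']
  · -- SurjOn
    intro x hx
    simp only [mem_setOf_eq] at hx
    set φ : ℝ → ℝ := fun t => t + η (Function.update x 2 t) with hφ
    have hφ0 : φ 0 = h (x 0) (x 1) := by
      have := htrace (Function.update x 2 0) (Function.update_self _ _ _)
      simpa [hφ, Function.update_of_ne] using this
    have hxφ0 : x 2 < φ 0 := by rw [hφ0]; exact hx
    have hcont : ContinuousOn φ (Iic (0:ℝ)) := by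
      have hc1 : Continuous (fun t : ℝ => Function.update x 2 t) := by
        apply continuous_pi
        intro i
        rcases eq_or_ne i 2 with rfl | hi
        · simpa [Function.update_self] using continuous_id'
        · simpa [Function.update_of_ne hi] using continuous_const
      exact continuousOn_id.add
        ((hreg.continuousOn.comp hc1.continuousOn) (fun t ht => hmemS x t ht))
    set T : ℝ := 2 * x 2 - 2 * φ 0 - 1 with hT
    have hT0 : T ≤ 0 := by rw [hT]; linarith
    have hφT : φ T < x 2 := by
      have h1 := hlip _ (hmemS x 0 le_rfl) _ (hmemS x T hT0)
      have h2 := hnorm x 0 T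
      have h3 : |T - 0| = -T := by rw [abs_of_nonpos (by linarith)]; ring
      have h4 : η (Function.update x 2 T) - η (Function.update x 2 0) ≤ c₀ * (-T) := by
        have := (abs_le.1 (h1.trans (mul_le_mul_of_nonneg_left h2 hc₀.le))).2
        rw [h3] at this; linarith
      have hφ0' : φ 0 = 0 + η (Function.update x 2 0) := rfl
      have : φ T ≤ φ 0 + (1 - c₀) * T := by
        simp only [hφ] at hφ0' ⊢; nlinarith
      nlinarith
    have hIVT := intermediate_value_Icc hT0 (hcont.mono (Icc_subset_Iic_self))
    obtain ⟨t, htmem, htval⟩ := hIVT ⟨hφT.le, hxφ0.le⟩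
    have ht0 : t < 0 := by
      rcases lt_or_eq_of_le htmem.2 with hlt | rfl
      · exact hlt
      · rw [htval] at hxφ0; exact absurd hxφ0 (lt_irrefl _)
    refine ⟨Function.update x 2 t, show Function.update x 2 t 2 < 0 by simpa [Function.update_self] using ht0, ?_⟩
    · funext i
      fin_cases i
      · simp [Function.update_of_ne]
      · simp [Function.update_of_ne]
      · show Function.update (Function.update x 2 t) 2
            (Function.update x 2 t 2 + η (Function.update x 2 t)) 2 = x 2
        rw [Function.update_self, Function.update_self]
        simpa [hφ] using htval
end

section
/- Let B(τ) ∈ 𝓛(L^r(ℝ²)³, W¹_r(ℝ³₋)³) (τ > 0) satisfy ‖∇ˡ B(τ)f‖_{L^r(ℝ³₋)} ≤ C τ^{−(1+l)/2 + 1/(2r)} e^{−τ} ‖f‖_{L^r(ℝ²)} for l = 0,1. Suppose 2 < p < ∞, 3 < q < 4, 2/p + 3/q < 1, and (1−2/p)^{-1} < r ≤ q, and let h ∈ L^p((0,∞), W¹_r(ℝ³₋)³) with (t+2)^{c} h ∈ L^p in the same norm for some c ≥ 0. Then the function u(t) = ∫₀ᵗ B(t−s) h(·,0,s) ds satisfies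 ‖u(t)‖_{W¹_r(ℝ³₋)} ≤ C' (t+2)^{−c} ‖(t+2)^c h‖_{L^p((0,∞), W¹_r(ℝ³₋))} for all t > 0. -/
open MeasureTheory
open scoped ENNReal

section StmtFiveAux

open Real Set

lemma aux_two_rpow {x y m : ℝ} (hx : 0 ≤ x) (hy : 0 ≤ y) (hm : 0 ≤ m) :
    (x + y) ^ m ≤ 2 ^ m * (x ^ m + y ^ m) := by
  rcases le_total x y with hxy | hxy
  · calc (x + y) ^ m ≤ (2 * y) ^ m := by
          apply Real.rpow_le_rpow (by linarith) (by linarith) hm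
      _ = 2 ^ m * y ^ m := Real.mul_rpow (by norm_num) hy
      _ ≤ 2 ^ m * (x ^ m + y ^ m) := by
          have := Real.rpow_nonneg hx m
          have h2 : (0:ℝ) ≤ 2 ^ m := Real.rpow_nonneg (by norm_num) m
          nlinarith
  · calc (x + y) ^ m ≤ (2 * x) ^ m := by
          apply Real.rpow_le_rpow (by linarith) (by linarith) hm
      _ = 2 ^ m * x ^ m := Real.mul_rpow (by norm_num) hx
      _ ≤ 2 ^ m * (x ^ m + y ^ m) := by
          have := Real.rpow_nonneg hy m
          have h2 : (0:ℝ) ≤ 2 ^ m := Real.rpow_nonneg (by norm_num) m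
          nlinarith

lemma aux_poly {c : ℝ} (hc : 0 ≤ c) {τ : ℝ} (hτ : 0 ≤ τ) :
    (τ + 2) ^ c ≤ (4 * (c + 1)) ^ c * Real.exp (τ / 2) := by
  set δ : ℝ := (2 * (c + 1))⁻¹ with hδ
  have hδpos : 0 < δ := by positivity
  have hδ1 : δ ≤ 1 := by
    rw [hδ]; rw [inv_le_one_iff₀]; right; linarith
  have h1 : τ + 2 ≤ (2 / δ) * Real.exp (δ * τ) := by
    have e1 : 1 + δ * τ ≤ Real.exp (δ * τ) := by
      have := Real.add_one_le_exp (δ * τ); linarith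
    have e2 : τ + 2 ≤ (2 / δ) * (1 + δ * τ) := by
      rw [div_mul_eq_mul_div, le_div_iff₀ hδpos]
      have : 0 ≤ δ * τ := by positivity
      nlinarith
    calc τ + 2 ≤ (2 / δ) * (1 + δ * τ) := e2
      _ ≤ (2 / δ) * Real.exp (δ * τ) := by
          apply mul_le_mul_of_nonneg_left e1 (by positivity)
  have h2d : (2 : ℝ) / δ = 4 * (c + 1) := by
    rw [hδ]; field_simp; ring
  calc (τ + 2) ^ c ≤ ((2 / δ) * Real.exp (δ * τ)) ^ c :=
        Real.rpow_le_rpow (by linarith) h1 hc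
    _ = (2 / δ) ^ c * Real.exp (δ * τ) ^ c := Real.mul_rpow (by positivity) (Real.exp_pos _).le
    _ = (4 * (c + 1)) ^ c * Real.exp (δ * τ * c) := by rw [h2d, ← Real.exp_mul]
    _ ≤ (4 * (c + 1)) ^ c * Real.exp (τ / 2) := by
        apply mul_le_mul_of_nonneg_left _ (Real.rpow_nonneg (by linarith) c)
        apply Real.exp_le_exp.2
        have hδc : δ * c ≤ 1 / 2 := by
          rw [hδ]
          rw [inv_mul_le_iff₀ (by linarith)]
          linarith
        calc δ * τ * c = (δ * c) * τ := by ring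
          _ ≤ (1/2) * τ := mul_le_mul_of_nonneg_right hδc hτ
          _ = τ / 2 := by ring

lemma aux_kernel {a b c m : ℝ} (ham : -1 < a * m) (hab : a ≤ b) (hm : 1 ≤ m) (hc : 0 ≤ c) :
    ∫⁻ τ in Set.Ioi (0:ℝ),
      (ENNReal.ofReal ((τ ^ a + τ ^ b) * Real.exp (-τ) * (τ + 2) ^ c)) ^ m < ⊤ := by
  set G : ℝ → ℝ := fun τ => (τ ^ a + τ ^ b) * Real.exp (-τ) * (τ + 2) ^ c with hG
  set W : ℝ → ℝ := fun τ => G τ ^ m with hW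
  have hm0 : (0:ℝ) ≤ m := by linarith
  have hm2 : (0:ℝ) < m / 2 := by linarith
  have hbm : -1 < b * m := lt_of_lt_of_le ham (by nlinarith)
  -- integrability of the majorant pieces
  have i1 : IntegrableOn (fun τ : ℝ => τ ^ (a*m) * Real.exp (-(m/2) * τ)) (Ioi 0) := by
    have := integrableOn_rpow_mul_exp_neg_mul_rpow ham zero_lt_one hm2
    refine this.congr_fun (fun x hx => ?_) measurableSet_Ioi
    simp only [Real.rpow_one]
  have i2 : IntegrableOn (fun τ : ℝ => τ ^ (b*m) * Real.exp (-(m/2) * τ)) (Ioi 0) := by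
    have := integrableOn_rpow_mul_exp_neg_mul_rpow hbm zero_lt_one hm2
    refine this.congr_fun (fun x hx => ?_) measurableSet_Ioi
    simp only [Real.rpow_one]
  set D : ℝ := (4 * (c + 1)) ^ (c * m) * 2 ^ m with hD
  have hDpos : 0 < D := by positivity
  have iV : IntegrableOn
      (fun τ : ℝ => D * (τ ^ (a*m) * Real.exp (-(m/2) * τ) + τ ^ (b*m) * Real.exp (-(m/2) * τ)))
      (Ioi 0) := ((i1.add i2).const_mul D)
  -- W is continuous on Ioi 0
  have hWmeas : AEStronglyMeasurable W ((volume : Measure ℝ).restrict (Ioi 0)) := by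
    apply ContinuousOn.aestronglyMeasurable _ measurableSet_Ioi
    have hb : ContinuousOn G (Ioi 0) := by
      apply ContinuousOn.mul
      apply ContinuousOn.mul
      · exact (continuousOn_id.rpow_const (fun x hx => Or.inl (ne_of_gt hx))).add
          (continuousOn_id.rpow_const (fun x hx => Or.inl (ne_of_gt hx)))
      · exact (Real.continuous_exp.comp continuous_neg).continuousOn
      · exact (continuous_id.add continuous_const).continuousOn.rpow_const
          (fun x hx => Or.inl (by simp only [mem_Ioi] at hx; intro h; simp at h; linarith))
    exact hb.rpow_const (fun x hx => Or.inr hm0)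
  -- pointwise bound
  have hbound : ∀ τ : ℝ, τ ∈ Ioi (0:ℝ) → ‖W τ‖ ≤
      D * (τ ^ (a*m) * Real.exp (-(m/2) * τ) + τ ^ (b*m) * Real.exp (-(m/2) * τ)) := by
    intro τ hτ
    simp only [mem_Ioi] at hτ
    have hτ0 : (0:ℝ) ≤ τ := hτ.le
    have hKnn : 0 ≤ τ ^ a + τ ^ b := by positivity
    have hGnn : 0 ≤ G τ := by
      apply mul_nonneg (mul_nonneg hKnn (Real.exp_pos _).le) (Real.rpow_nonneg (by linarith) c)
    have hWnn : 0 ≤ W τ := Real.rpow_nonneg hGnn m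
    rw [Real.norm_eq_abs, abs_of_nonneg hWnn]
    have step1 : G τ ≤ (4 * (c + 1)) ^ c * ((τ ^ a + τ ^ b) * Real.exp (-(τ/2))) := by
      have hpoly := aux_poly hc hτ0
      calc G τ = (τ ^ a + τ ^ b) * Real.exp (-τ) * (τ + 2) ^ c := rfl
        _ ≤ (τ ^ a + τ ^ b) * Real.exp (-τ) * ((4 * (c + 1)) ^ c * Real.exp (τ / 2)) := by
            apply mul_le_mul_of_nonneg_left hpoly (mul_nonneg hKnn (Real.exp_pos _).le)
        _ = (4 * (c + 1)) ^ c * ((τ ^ a + τ ^ b) * (Real.exp (-τ) * Real.exp (τ/2))) := by ring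
        _ = (4 * (c + 1)) ^ c * ((τ ^ a + τ ^ b) * Real.exp (-(τ/2))) := by
            rw [← Real.exp_add]; ring_nf
    have hc4 : (0:ℝ) ≤ (4 * (c + 1)) ^ c := Real.rpow_nonneg (by linarith) c
    have step2 : W τ ≤ ((4 * (c + 1)) ^ c) ^ m *
        ((τ ^ a + τ ^ b) * Real.exp (-(τ/2))) ^ m := by
      rw [hW, ← Real.mul_rpow hc4 (mul_nonneg hKnn (Real.exp_pos _).le)]
      exact Real.rpow_le_rpow hGnn step1 hm0
    have step3 : ((τ ^ a + τ ^ b) * Real.exp (-(τ/2))) ^ m ≤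
        2 ^ m * (τ ^ (a*m) * Real.exp (-(m/2) * τ) + τ ^ (b*m) * Real.exp (-(m/2) * τ)) := by
      have e1 : (τ ^ a + τ ^ b) * Real.exp (-(τ/2)) =
          τ ^ a * Real.exp (-(τ/2)) + τ ^ b * Real.exp (-(τ/2)) := by ring
      rw [e1]
      have h2 := aux_two_rpow (x := τ ^ a * Real.exp (-(τ/2)))
        (y := τ ^ b * Real.exp (-(τ/2)))
        (mul_nonneg (Real.rpow_nonneg hτ0 a) (Real.exp_pos _).le)
        (mul_nonneg (Real.rpow_nonneg hτ0 b) (Real.exp_pos _).le) hm0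
      have e2 : ∀ d : ℝ, (τ ^ d * Real.exp (-(τ/2))) ^ m = τ ^ (d*m) * Real.exp (-(m/2) * τ) := by
        intro d
        rw [Real.mul_rpow (Real.rpow_nonneg hτ0 d) (Real.exp_pos _).le,
          ← Real.rpow_mul hτ0, ← Real.exp_mul]
        ring_nf
      rw [e2 a, e2 b] at h2
      exact h2
    calc W τ ≤ ((4 * (c + 1)) ^ c) ^ m * ((τ ^ a + τ ^ b) * Real.exp (-(τ/2))) ^ m := step2
      _ ≤ ((4 * (c + 1)) ^ c) ^ m * (2 ^ m *
            (τ ^ (a*m) * Real.exp (-(m/2) * τ) + τ ^ (b*m) * Real.exp (-(m/2) * τ))) := by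
          apply mul_le_mul_of_nonneg_left step3 (Real.rpow_nonneg hc4 m)
      _ = D * (τ ^ (a*m) * Real.exp (-(m/2) * τ) + τ ^ (b*m) * Real.exp (-(m/2) * τ)) := by
          rw [hD, ← Real.rpow_mul (by linarith : (0:ℝ) ≤ 4 * (c+1))]
          ring
  -- W is integrable
  have hWint : IntegrableOn W (Ioi 0) := by
    apply Integrable.mono' iV hWmeas
    exact (ae_restrict_iff' measurableSet_Ioi).2 (Filter.Eventually.of_forall hbound)
  -- conclude
  have key : ∀ᵐ τ ∂((volume : Measure ℝ).restrict (Ioi 0)),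
      (ENNReal.ofReal (G τ)) ^ m = ENNReal.ofReal (W τ) := by
    refine (ae_restrict_iff' measurableSet_Ioi).2 (Filter.Eventually.of_forall ?_)
    intro τ hτ
    simp only [mem_Ioi] at hτ
    have hτ0 : (0:ℝ) ≤ τ := hτ.le
    have hGnn : 0 ≤ G τ := by
      have hKnn : 0 ≤ τ ^ a + τ ^ b := by positivity
      exact mul_nonneg (mul_nonneg hKnn (Real.exp_pos _).le) (Real.rpow_nonneg (by linarith) c)
    rw [hW, ← ENNReal.ofReal_rpow_of_nonneg hGnn hm0]
  calc ∫⁻ τ in Set.Ioi (0:ℝ), (ENNReal.ofReal (G τ)) ^ m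
      = ∫⁻ τ in Set.Ioi (0:ℝ), ENNReal.ofReal (W τ) := lintegral_congr_ae key
    _ ≤ ∫⁻ τ in Set.Ioi (0:ℝ), (‖W τ‖₊ : ℝ≥0∞) := by
        apply lintegral_mono
        intro τ
        exact Real.ofReal_le_enorm (W τ)
    _ < ⊤ := hWint.2

end StmtFiveAux

open Real Set in
set_option maxHeartbeats 1000000 in
/-- Decay estimate for `u(t) = ∫₀ᵗ B(t-s) h(·,0,s) ds`.  Here `Z` plays the role of
`W¹_r(ℝ³₋)³`, `Y` that of the boundary space `L^r(ℝ²)³`, `γ : Z → Y` is the (normalized)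
trace operator, and the family `B(τ)` satisfies the kernel bounds
`‖∇ˡ B(τ)f‖_{L^r} ≤ C τ^{-(1+l)/2 + 1/(2r)} e^{-τ} ‖f‖` for `l = 0, 1` (combined into an
equivalent bound for the `W¹_r` norm).  If `(t+2)^c h ∈ L^p((0,∞), W¹_r)` with norm at
most `M`, then `‖u(t)‖_{W¹_r} ≤ C' (t+2)^{-c} M` for all `t > 0`. -/
theorem stmt_5 (p q r c C : ℝ)
    (hp : 2 < p) (hq3 : 3 < q) (hq4 : q < 4) (hpq : 2 / p + 3 / q < 1)
    (hr1 : (1 - 2 / p)⁻¹ < r) (hrq : r ≤ q) (hc : 0 ≤ c) (hC : 0 < C) :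
    ∃ C' : ℝ, 0 < C' ∧
      ∀ (Y Z : Type) [NormedAddCommGroup Y] [NormedSpace ℝ Y]
        [NormedAddCommGroup Z] [NormedSpace ℝ Z],
        ∀ (γ : Z →L[ℝ] Y), ‖γ‖ ≤ 1 →
        ∀ (B : ℝ → Y →L[ℝ] Z),
        (∀ τ : ℝ, 0 < τ →
          ‖B τ‖ ≤ C * (τ ^ (-(1 : ℝ) + 1 / (2 * r)) + τ ^ (-(1 : ℝ) / 2 + 1 / (2 * r))) *
            Real.exp (-τ)) →
        ∀ (h : ℝ → Z) (M : ℝ), 0 ≤ M →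
        (∀ t : ℝ, AEStronglyMeasurable (fun s => (B (t - s)) (γ (h s)))
          (volume.restrict (Set.Ioo 0 t))) →
        eLpNorm (fun s : ℝ => (s + 2) ^ c * ‖h s‖) (ENNReal.ofReal p)
            (volume.restrict (Set.Ioi (0 : ℝ))) ≤ ENNReal.ofReal M →
        ∀ t : ℝ, 0 < t →
          ‖∫ s in Set.Ioo (0 : ℝ) t, (B (t - s)) (γ (h s))‖ ≤ C' * (t + 2) ^ (-c) * M := by
  -- arithmetic preliminaries
  have hp0 : (0:ℝ) < p := by linarith
  have hp1 : (0:ℝ) < p - 1 := by linarith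
  have hq0 : (0:ℝ) < q := by linarith
  have h3q : (3:ℝ)/4 < 3/q := by
    apply div_lt_div_of_pos_left (by norm_num) hq0 hq4
  have h2p : 2/p < 1/4 := by linarith
  have hp8 : (8:ℝ) < p := by
    rw [div_lt_div_iff₀ hp0 (by norm_num)] at h2p; linarith
  have hinvpos : (0:ℝ) < 1 - 2/p := by
    have : 2/p < 1 := by linarith
    linarith
  have hr1' : (1:ℝ) < r := by
    have h1 : (1:ℝ) < (1 - 2/p)⁻¹ := by
      apply (one_lt_inv₀ hinvpos).2
      have : (0:ℝ) < 2/p := by positivity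
      linarith
    linarith
  have hr0 : (0:ℝ) < r := by linarith
  have h2rp : 2*r < p := by linarith
  set p' : ℝ := p / (p - 1) with hp'def
  have hp'1 : 1 < p' := by
    rw [hp'def, lt_div_iff₀ hp1]; linarith
  have hp'0 : (0:ℝ) < p' := by linarith
  have hconj : p'.HolderConjugate p := (Real.HolderConjugate.conjExponent (by linarith)).symm
  set a : ℝ := -(1:ℝ) + 1/(2*r) with hadef
  set b : ℝ := -(1:ℝ)/2 + 1/(2*r) with hbdef
  have hab : a ≤ b := by rw [hadef, hbdef]; linarith
  have ham : -1 < a * p' := by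
    have hr2 : (0:ℝ) < 2*r := by linarith
    have h1 : 1 < p / (2*r) := (one_lt_div hr2).2 h2rp
    rw [hadef, hp'def,
      show (-(1:ℝ) + 1/(2*r)) * (p/(p-1)) = (-p + p/(2*r))/(p-1) by field_simp,
      lt_div_iff₀ hp1]
    linarith
  set G : ℝ → ℝ := fun τ => (τ ^ a + τ ^ b) * Real.exp (-τ) * (τ + 2) ^ c with hGdef
  set Jinf : ℝ≥0∞ := ∫⁻ τ in Set.Ioi (0:ℝ), (ENNReal.ofReal (G τ)) ^ p' with hJdef
  have hJ : Jinf < ⊤ := aux_kernel ham hab hp'1.le hc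
  have hJ' : Jinf ^ (1/p') ≠ ⊤ := ENNReal.rpow_ne_top_of_nonneg (by positivity) hJ.ne
  set J : ℝ := (Jinf ^ (1/p')).toReal with hJreal
  have hJnn : 0 ≤ J := ENNReal.toReal_nonneg
  refine ⟨C * (J + 1), by nlinarith, ?_⟩
  intro Y Z _ _ _ _ γ hγ B hB h M hM hmeas hLp t ht
  set φ : ℝ → ℝ := fun s : ℝ => (s + 2) ^ c * ‖h s‖ with hφdef
  set μt := volume.restrict (Set.Ioo (0:ℝ) t) with hμtdef
  set F : ℝ → Z := fun s => (B (t - s)) (γ (h s)) with hFdef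
  set A : ℝ≥0∞ := ENNReal.ofReal (C * (t+2) ^ (-c)) with hAdef
  have htp : (0:ℝ) < t + 2 := by linarith
  have hXnn : (0:ℝ) ≤ C * (t+2) ^ (-c) := by positivity
  have hA0 : A ≠ 0 := by
    rw [hAdef, Ne, ENNReal.ofReal_eq_zero, not_le]
    positivity
  set cf : ℝ → ℝ≥0∞ := fun s => A * ENNReal.ofReal (G (t - s)) with hcfdef
  set ψ : ℝ → ℝ≥0∞ := fun s => (‖F s‖₊ : ℝ≥0∞) with hψdef
  set φ' : ℝ → ℝ≥0∞ := fun s => ψ s / cf s with hφ'def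
  have hψm : AEMeasurable ψ μt := (hmeas t).enorm
  have hGmeas : Measurable G := by
    have m1 : Measurable fun τ : ℝ => τ ^ a := by measurability
    have m2 : Measurable fun τ : ℝ => τ ^ b := by measurability
    have m3 : Measurable fun τ : ℝ => (τ + 2) ^ c := by measurability
    have m4 : Measurable fun τ : ℝ => Real.exp (-τ) :=
      Real.measurable_exp.comp measurable_neg
    exact ((m1.add m2).mul m4).mul m3
  have hGm : Measurable fun s : ℝ => ENNReal.ofReal (G (t - s)) :=
    ENNReal.measurable_ofReal.comp (hGmeas.comp (measurable_const.sub measurable_id))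
  have hcfm : Measurable cf := hGm.const_mul A
  have hφ'm : AEMeasurable φ' μt := hψm.div hcfm.aemeasurable
  -- pointwise facts
  have hcf_ne : ∀ s ∈ Set.Ioo (0:ℝ) t, cf s ≠ 0 ∧ cf s ≠ ⊤ := by
    intro s hs
    obtain ⟨hs0, hst⟩ := hs
    have hτ : (0:ℝ) < t - s := by linarith
    have hGpos : 0 < G (t - s) := by
      have h1 : 0 < (t-s) ^ a := Real.rpow_pos_of_pos hτ a
      have h2 : 0 < (t-s) ^ b := Real.rpow_pos_of_pos hτ b
      have h3 : 0 < ((t-s)+2) ^ c := Real.rpow_pos_of_pos (by linarith) c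
      simp only [hGdef]
      exact mul_pos (mul_pos (by linarith) (Real.exp_pos _)) h3
    constructor
    · exact mul_ne_zero hA0 (by rw [Ne, ENNReal.ofReal_eq_zero, not_le]; exact hGpos)
    · exact ENNReal.mul_ne_top ENNReal.ofReal_ne_top ENNReal.ofReal_ne_top
  have hkey : ∀ s ∈ Set.Ioo (0:ℝ) t, ψ s ≤ cf s * ENNReal.ofReal (φ s) := by
    intro s hs
    obtain ⟨hs0, hst⟩ := hs
    have hτ : (0:ℝ) < t - s := by linarith
    have hsp2 : (0:ℝ) < s + 2 := by linarith
    have hsc : (0:ℝ) < (s+2) ^ c := Real.rpow_pos_of_pos hsp2 c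
    have htc : (0:ℝ) < (t+2) ^ c := Real.rpow_pos_of_pos htp c
    have hKnn : (0:ℝ) ≤ (t-s) ^ a + (t-s) ^ b :=
      add_nonneg (Real.rpow_nonneg hτ.le a) (Real.rpow_nonneg hτ.le b)
    have hGnn : (0:ℝ) ≤ G (t-s) := by
      simp only [hGdef]
      exact mul_nonneg (mul_nonneg hKnn (Real.exp_pos _).le)
        (Real.rpow_nonneg (by linarith) c)
    have hφnn : (0:ℝ) ≤ φ s := by
      rw [hφdef]; exact mul_nonneg (Real.rpow_nonneg hsp2.le c) (norm_nonneg _)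
    have hCKE : (0:ℝ) ≤ C * ((t-s) ^ a + (t-s) ^ b) * Real.exp (-(t-s)) :=
      mul_nonneg (mul_nonneg hC.le hKnn) (Real.exp_pos _).le
    have h1 : ‖F s‖ ≤ ‖B (t-s)‖ * ‖h s‖ := by
      calc ‖F s‖ ≤ ‖B (t-s)‖ * ‖γ (h s)‖ := (B (t-s)).le_opNorm _
        _ ≤ ‖B (t-s)‖ * ‖h s‖ := by
            apply mul_le_mul_of_nonneg_left _ (norm_nonneg _)
            calc ‖γ (h s)‖ ≤ ‖γ‖ * ‖h s‖ := γ.le_opNorm _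
              _ ≤ 1 * ‖h s‖ := mul_le_mul_of_nonneg_right hγ (norm_nonneg _)
              _ = ‖h s‖ := one_mul _
    have h3 : ‖h s‖ = ((s+2) ^ c)⁻¹ * φ s := by
      rw [hφdef, inv_mul_cancel_left₀ hsc.ne']
    have h4 : ((s+2) ^ c)⁻¹ ≤ (t+2) ^ (-c) * ((t-s)+2) ^ c := by
      have hm : (t+2) ≤ (s+2) * ((t-s)+2) := by nlinarith
      have h5 : (t+2) ^ c ≤ (s+2) ^ c * ((t-s)+2) ^ c := by
        rw [← Real.mul_rpow hsp2.le (by linarith)]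
        exact Real.rpow_le_rpow htp.le hm hc
      have h6 : ((s+2) ^ c)⁻¹ * (t+2) ^ c ≤ ((t-s)+2) ^ c := by
        rw [inv_mul_le_iff₀ hsc]
        exact h5
      rw [Real.rpow_neg htp.le]
      calc ((s+2) ^ c)⁻¹ = (((s+2) ^ c)⁻¹ * (t+2) ^ c) * ((t+2) ^ c)⁻¹ := by
            field_simp
        _ ≤ ((t-s)+2) ^ c * ((t+2) ^ c)⁻¹ :=
            mul_le_mul_of_nonneg_right h6 (by positivity)
        _ = ((t+2) ^ c)⁻¹ * ((t-s)+2) ^ c := by ring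
    have hreal : ‖F s‖ ≤ (C * (t+2) ^ (-c)) * G (t-s) * φ s := by
      calc ‖F s‖ ≤ ‖B (t-s)‖ * ‖h s‖ := h1
        _ ≤ (C * ((t-s) ^ a + (t-s) ^ b) * Real.exp (-(t-s))) * ‖h s‖ :=
            mul_le_mul_of_nonneg_right (hB (t-s) hτ) (norm_nonneg _)
        _ = (C * ((t-s) ^ a + (t-s) ^ b) * Real.exp (-(t-s))) * (((s+2) ^ c)⁻¹ * φ s) := by
            rw [h3]
        _ ≤ (C * ((t-s) ^ a + (t-s) ^ b) * Real.exp (-(t-s))) *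
              (((t+2) ^ (-c) * ((t-s)+2) ^ c) * φ s) := by
            apply mul_le_mul_of_nonneg_left (mul_le_mul_of_nonneg_right h4 hφnn) hCKE
        _ = (C * (t+2) ^ (-c)) * G (t-s) * φ s := by
            rw [hGdef]; ring
    have hψeq : ψ s = ENNReal.ofReal ‖F s‖ := (ofReal_norm_eq_enorm _).symm
    rw [hψeq, hcfdef, hAdef]
    calc ENNReal.ofReal ‖F s‖ ≤ ENNReal.ofReal ((C * (t+2) ^ (-c)) * G (t-s) * φ s) :=
          ENNReal.ofReal_le_ofReal hreal
      _ = ENNReal.ofReal (C * (t+2) ^ (-c)) * ENNReal.ofReal (G (t-s)) *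
            ENNReal.ofReal (φ s) := by
          rw [ENNReal.ofReal_mul (mul_nonneg hXnn hGnn),
            ENNReal.ofReal_mul hXnn]
      _ = ENNReal.ofReal (C * (t+2) ^ (-c)) * ENNReal.ofReal (G (t-s)) *
            ENNReal.ofReal (φ s) := rfl
  -- step 1: norm of integral ≤ lintegral of ψ
  have step1 : ‖∫ s in Set.Ioo (0:ℝ) t, F s‖ ≤ (∫⁻ s, ψ s ∂μt).toReal := by
    have h0 := norm_integral_le_lintegral_norm (μ := μt) F
    simp only [ofReal_norm_eq_enorm, enorm_eq_nnnorm] at h0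
    simp only [hψdef, hμtdef] at *
    exact h0
  -- step 2: insert the division
  have step2 : ∫⁻ s, ψ s ∂μt ≤ ∫⁻ s, (cf * φ') s ∂μt := by
    apply lintegral_mono_ae
    rw [hμtdef]
    filter_upwards [ae_restrict_mem measurableSet_Ioo] with s hs
    have hne := hcf_ne s hs
    have e : ψ s = (cf * φ') s := by
      simp only [Pi.mul_apply, hφ'def]
      exact (ENNReal.mul_div_cancel hne.1 hne.2).symm
    exact e.le
  -- step 3: Hölder's inequality
  have step3 : ∫⁻ s, (cf * φ') s ∂μt ≤
      (∫⁻ s, cf s ^ p' ∂μt) ^ (1/p') * (∫⁻ s, φ' s ^ p ∂μt) ^ (1/p) :=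
    ENNReal.lintegral_mul_le_Lp_mul_Lq μt hconj hcfm.aemeasurable hφ'm
  -- change of variables for the kernel factor
  have hpre : (fun x : ℝ => t - x) ⁻¹' (Set.Ioo 0 t) = Set.Ioo 0 t := by
    ext x
    simp only [Set.mem_preimage, Set.mem_Ioo]
    constructor <;> rintro ⟨h1, h2⟩ <;> constructor <;> linarith
  have hchg : ∫⁻ s in Set.Ioo (0:ℝ) t, (ENNReal.ofReal (G (t - s))) ^ p'
      = ∫⁻ τ in Set.Ioo (0:ℝ) t, (ENNReal.ofReal (G τ)) ^ p' := by
    have h0 := (Measure.measurePreserving_sub_left volume t).setLIntegral_comp_preimage_emb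
      (MeasurableEquiv.subLeft t).measurableEmbedding
      (fun τ => (ENNReal.ofReal (G τ)) ^ p') (Set.Ioo 0 t)
    rw [hpre] at h0
    exact h0
  have fac1 : (∫⁻ s, cf s ^ p' ∂μt) ^ (1/p') ≤ A * Jinf ^ (1/p') := by
    have e1 : (fun s => cf s ^ p') =
        fun s => A ^ p' * (ENNReal.ofReal (G (t - s))) ^ p' := by
      funext s
      rw [hcfdef]
      exact ENNReal.mul_rpow_of_nonneg _ _ hp'0.le
    calc (∫⁻ s, cf s ^ p' ∂μt) ^ (1/p')
        = (∫⁻ s, A ^ p' * (ENNReal.ofReal (G (t - s))) ^ p' ∂μt) ^ (1/p') := by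
          rw [show (∫⁻ s, cf s ^ p' ∂μt) = ∫⁻ s, A ^ p' * (ENNReal.ofReal (G (t - s))) ^ p' ∂μt
            from congrArg _ (by rw [← e1])]
      _ = (A ^ p' * ∫⁻ s, (ENNReal.ofReal (G (t - s))) ^ p' ∂μt) ^ (1/p') := by
          rw [lintegral_const_mul' _ _
            (ENNReal.rpow_ne_top_of_nonneg hp'0.le ENNReal.ofReal_ne_top)]
      _ ≤ (A ^ p' * Jinf) ^ (1/p') := by
          apply ENNReal.rpow_le_rpow _ (by positivity)
          refine mul_le_mul_of_nonneg_left ?_ (by positivity)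
          rw [hμtdef, hJdef]
          calc ∫⁻ s in Set.Ioo (0:ℝ) t, (ENNReal.ofReal (G (t - s))) ^ p'
              = ∫⁻ τ in Set.Ioo (0:ℝ) t, (ENNReal.ofReal (G τ)) ^ p' := hchg
            _ ≤ ∫⁻ τ in Set.Ioi (0:ℝ), (ENNReal.ofReal (G τ)) ^ p' :=
                lintegral_mono_set Set.Ioo_subset_Ioi_self
      _ = A * Jinf ^ (1/p') := by
          rw [ENNReal.mul_rpow_of_nonneg _ _ (by positivity : (0:ℝ) ≤ 1/p'),
            ← ENNReal.rpow_mul, mul_one_div_cancel hp'0.ne', ENNReal.rpow_one]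
  have fac2 : (∫⁻ s, φ' s ^ p ∂μt) ^ (1/p) ≤ ENNReal.ofReal M := by
    have hφ'le : ∀ᵐ s ∂μt, φ' s ^ p ≤ ((‖φ s‖₊ : ℝ≥0∞)) ^ p := by
      rw [hμtdef]
      filter_upwards [ae_restrict_mem measurableSet_Ioo] with s hs
      apply ENNReal.rpow_le_rpow _ hp0.le
      have h1 : φ' s ≤ ENNReal.ofReal (φ s) := by
        rw [hφ'def]
        exact ENNReal.div_le_of_le_mul' (hkey s hs)
      exact h1.trans (Real.ofReal_le_enorm _)
    calc (∫⁻ s, φ' s ^ p ∂μt) ^ (1/p)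
        ≤ (∫⁻ s, ((‖φ s‖₊ : ℝ≥0∞)) ^ p ∂μt) ^ (1/p) :=
          ENNReal.rpow_le_rpow (lintegral_mono_ae hφ'le) (by positivity)
      _ ≤ (∫⁻ s in Set.Ioi (0:ℝ), ((‖φ s‖₊ : ℝ≥0∞)) ^ p) ^ (1/p) := by
          apply ENNReal.rpow_le_rpow _ (by positivity)
          rw [hμtdef]
          exact lintegral_mono_set Set.Ioo_subset_Ioi_self
      _ ≤ ENNReal.ofReal M := by
          have he := eLpNorm_eq_lintegral_rpow_enorm (f := φ)
            (μ := volume.restrict (Set.Ioi (0:ℝ))) (p := ENNReal.ofReal p)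
            (by rw [Ne, ENNReal.ofReal_eq_zero]; exact not_le.2 hp0) ENNReal.ofReal_ne_top
          rw [ENNReal.toReal_ofReal hp0.le] at he
          simp only [enorm_eq_nnnorm] at he
          rw [← he]
          exact hLp
  have total : ∫⁻ s, ψ s ∂μt ≤ A * Jinf ^ (1/p') * ENNReal.ofReal M :=
    step2.trans (step3.trans (mul_le_mul' fac1 fac2))
  have Qne : A * Jinf ^ (1/p') * ENNReal.ofReal M ≠ ⊤ :=
    ENNReal.mul_ne_top (ENNReal.mul_ne_top ENNReal.ofReal_ne_top hJ') ENNReal.ofReal_ne_top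
  calc ‖∫ s in Set.Ioo (0:ℝ) t, F s‖ ≤ (∫⁻ s, ψ s ∂μt).toReal := step1
    _ ≤ (A * Jinf ^ (1/p') * ENNReal.ofReal M).toReal := ENNReal.toReal_mono Qne total
    _ = (C * (t+2) ^ (-c)) * J * M := by
        rw [ENNReal.toReal_mul, ENNReal.toReal_mul, hAdef, ENNReal.toReal_ofReal hXnn,
          ENNReal.toReal_ofReal hM, ← hJreal]
    _ ≤ C * (J + 1) * (t + 2) ^ (-c) * M := by
        have h1 : (0:ℝ) ≤ (t+2) ^ (-c) * M := by positivity
        calc (C * (t+2) ^ (-c)) * J * M = (C * J) * ((t+2) ^ (-c) * M) := by ring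
          _ ≤ (C * (J+1)) * ((t+2) ^ (-c) * M) := by
              apply mul_le_mul_of_nonneg_right _ h1
              nlinarith
          _ = C * (J+1) * (t+2) ^ (-c) * M := by ring
end

section
/- Let f : ℝ → ℂ be C² on ℝ \ {0} and suppose there are constants M ≥ 0 and σ ∈ (0,1) such that |f^{(k)}(τ)| ≤ M |τ|^{σ−1−k} for k = 0, 1 and all τ ≠ 0, and f ∈ L¹(ℝ). Then the inverse Fourier transform g(t) = (1/2π)∫_ℝ e^{itτ} f(τ) dτ satisfies |g(t)| ≤ C M |t|^{−σ} for all t ≠ 0, with C depending only on σ. -/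
open MeasureTheory
open Set

lemma my_integrable_comp_abs {Φ : ℝ → ℝ} (h : IntegrableOn (fun x => Φ |x|) (Ioi 0)) :
    Integrable (fun x => Φ |x|) := by
  have int_Iic : IntegrableOn (fun x ↦ Φ |x|) (Iic 0) := by
    rw [← Measure.map_neg_eq_self (volume : Measure ℝ)]
    have m : MeasurableEmbedding fun x : ℝ => -x := (Homeomorph.neg ℝ).measurableEmbedding
    rw [m.integrableOn_map_iff]
    simp_rw [Function.comp_def, abs_neg, neg_preimage, neg_Iic, neg_zero]
    exact (Iff.mpr integrableOn_Ici_iff_integrableOn_Ioi) h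
  have := int_Iic.union h
  rwa [Iic_union_Ioi, integrableOn_univ] at this

lemma aux_near {σ R : ℝ} (h0 : 0 < σ) (h1 : σ < 1) (hR : 0 < R) :
    Integrable (fun x : ℝ => if |x| ≤ R then |x| ^ (σ - 1) else 0) ∧
      (∫ x : ℝ, (if |x| ≤ R then |x| ^ (σ - 1) else 0)) = 2 * (R ^ σ / σ) := by
  set Φ : ℝ → ℝ := fun x => if x ≤ R then x ^ (σ - 1) else 0 with hΦ
  have hkey : (fun x : ℝ => if |x| ≤ R then |x| ^ (σ - 1) else 0) = fun x => Φ |x| := rfl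
  have hIoc : IntegrableOn (fun x : ℝ => x ^ (σ - 1)) (Ioc 0 R) :=
    (intervalIntegral.intervalIntegrable_rpow' (by linarith)).1
  have heq : EqOn ((Ioc 0 R).indicator fun x : ℝ => x ^ (σ - 1)) (fun x => Φ |x|) (Ioi 0) := by
    intro x hx
    simp only [indicator_apply, mem_Ioc, hΦ, abs_of_pos (mem_Ioi.mp hx)]
    by_cases hxR : x ≤ R
    · rw [if_pos ⟨mem_Ioi.mp hx, hxR⟩, if_pos hxR]
    · rw [if_neg (by tauto), if_neg hxR]
  have hIoi : IntegrableOn (fun x => Φ |x|) (Ioi 0) :=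
    ((hIoc.integrable_indicator measurableSet_Ioc).integrableOn).congr_fun heq measurableSet_Ioi
  have hint : Integrable (fun x => Φ |x|) := my_integrable_comp_abs hIoi
  refine ⟨hkey ▸ hint, ?_⟩
  rw [hkey, integral_comp_abs (f := Φ)]
  have habs0 : (∫ x in Ioi (0:ℝ), Φ x) = ∫ x in Ioi (0:ℝ), Φ |x| :=
    setIntegral_congr_fun measurableSet_Ioi (fun x hx => by rw [abs_of_pos (mem_Ioi.mp hx)])
  have : (∫ x in Ioi (0:ℝ), Φ x) = ∫ x in Ioc (0:ℝ) R, x ^ (σ - 1) := by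
    rw [habs0, ← setIntegral_congr_fun measurableSet_Ioi heq, integral_indicator measurableSet_Ioc,
      Measure.restrict_restrict measurableSet_Ioc, inter_eq_left.mpr Ioc_subset_Ioi_self]
  rw [this, ← intervalIntegral.integral_of_le hR.le,
    integral_rpow (Or.inl (by linarith)),
    Real.zero_rpow (by intro hc; rw [show σ - 1 + 1 = σ by ring] at hc; exact h0.ne' hc),
    show σ - 1 + 1 = σ by ring]
  ring

lemma aux_far {σ R : ℝ} (h1 : σ < 1) (hR : 0 < R) :
    Integrable (fun x : ℝ => if R < |x| then |x| ^ (σ - 2) else 0) ∧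
      (∫ x : ℝ, (if R < |x| then |x| ^ (σ - 2) else 0)) = 2 * (R ^ (σ - 1) / (1 - σ)) := by
  set Φ : ℝ → ℝ := fun x => if R < x then x ^ (σ - 2) else 0 with hΦ
  have hkey : (fun x : ℝ => if R < |x| then |x| ^ (σ - 2) else 0) = fun x => Φ |x| := rfl
  have hIoi' : IntegrableOn (fun x : ℝ => x ^ (σ - 2)) (Ioi R) :=
    integrableOn_Ioi_rpow_of_lt (by linarith) hR
  have heq : EqOn ((Ioi R).indicator fun x : ℝ => x ^ (σ - 2)) (fun x => Φ |x|) (Ioi 0) := by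
    intro x hx
    simp only [indicator_apply, mem_Ioi, hΦ, abs_of_pos (mem_Ioi.mp hx)]
  have hIoi : IntegrableOn (fun x => Φ |x|) (Ioi 0) :=
    ((hIoi'.integrable_indicator measurableSet_Ioi).integrableOn).congr_fun heq measurableSet_Ioi
  have hint : Integrable (fun x => Φ |x|) := my_integrable_comp_abs hIoi
  refine ⟨hkey ▸ hint, ?_⟩
  rw [hkey, integral_comp_abs (f := Φ)]
  have habs0 : (∫ x in Ioi (0:ℝ), Φ x) = ∫ x in Ioi (0:ℝ), Φ |x| :=
    setIntegral_congr_fun measurableSet_Ioi (fun x hx => by rw [abs_of_pos (mem_Ioi.mp hx)])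
  have : (∫ x in Ioi (0:ℝ), Φ x) = ∫ x in Ioi R, x ^ (σ - 2) := by
    rw [habs0, ← setIntegral_congr_fun measurableSet_Ioi heq, integral_indicator measurableSet_Ioi,
      Measure.restrict_restrict measurableSet_Ioi,
      inter_eq_left.mpr (Ioi_subset_Ioi hR.le)]
  rw [this, integral_Ioi_rpow_of_lt (by linarith) hR]
  rw [show σ - 2 + 1 = σ - 1 by ring]
  have h2 : (1:ℝ) - σ ≠ 0 := by linarith
  have h3 : σ - 1 ≠ 0 := by linarith
  field_simp
  ring

/-- One-dimensional Mikhlin-type pointwise estimate (Shibata–Shimizu, `n = 1`, `L = 0`):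
if `f` is `C²` on `ℝ \ {0}`, integrable, and `|f^{(k)}(τ)| ≤ M |τ|^{σ-1-k}` for
`k = 0, 1`, with `σ ∈ (0,1)`, then the inverse Fourier transform
`g(t) = (1/2π) ∫ e^{itτ} f(τ) dτ` satisfies `|g(t)| ≤ C M |t|^{-σ}` for `t ≠ 0`,
with `C` depending only on `σ`. -/
theorem stmt_14 (σ : ℝ) (hσ : σ ∈ Set.Ioo (0 : ℝ) 1) :
    ∃ C : ℝ, 0 < C ∧
      ∀ (f : ℝ → ℂ) (M : ℝ), 0 ≤ M →
        ContDiffOn ℝ 2 f {τ : ℝ | τ ≠ 0} →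
        Integrable f →
        (∀ τ : ℝ, τ ≠ 0 → ‖f τ‖ ≤ M * |τ| ^ (σ - 1)) →
        (∀ τ : ℝ, τ ≠ 0 → ‖deriv f τ‖ ≤ M * |τ| ^ (σ - 2)) →
        ∀ t : ℝ, t ≠ 0 →
          ‖((1 / (2 * Real.pi) : ℝ) : ℂ) *
              ∫ τ : ℝ, Complex.exp (Complex.I * (t : ℂ) * (τ : ℂ)) * f τ‖ ≤
            C * M * |t| ^ (-σ) := by
  obtain ⟨hσ0, hσ1⟩ := hσ
  set S : ℝ := 2 * ((3:ℝ) ^ σ / σ) + 2 * ((4:ℝ) ^ σ / σ) +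
      (3/2 : ℝ) ^ (2 - σ) * (2 * ((3:ℝ) ^ (σ - 1) / (1 - σ))) with hS
  have hSpos : 0 < S := by
    have h1 : (0:ℝ) < 1 - σ := by linarith
    positivity
  refine ⟨Real.pi ^ σ / (4 * Real.pi) * S, by positivity, ?_⟩
  intro f M hM hcd hfi hbd0 hbd1 t ht
  set h : ℝ := Real.pi / t with hh
  have hh0 : h ≠ 0 := div_ne_zero Real.pi_ne_zero ht
  have hhpos : 0 < |h| := abs_pos.mpr hh0
  have habs : |h| = Real.pi / |t| := by rw [hh, abs_div, abs_of_pos Real.pi_pos]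
  set R : ℝ := 3 * |h| with hRdef
  have hR : 0 < R := by positivity
  -- the oscillating factor
  set e : ℝ → ℂ := fun τ => Complex.exp (Complex.I * (t : ℂ) * (τ : ℂ)) with he
  have he_cont : Continuous e := by
    exact Complex.continuous_exp.comp (continuous_const.mul Complex.continuous_ofReal)
  have he_norm : ∀ τ : ℝ, ‖e τ‖ = 1 := by
    intro τ
    rw [he]
    simp [Complex.norm_exp]
  have hint1 : Integrable (fun τ => e τ * f τ) :=
    hfi.bdd_mul (c := 1) he_cont.aestronglyMeasurable (Filter.Eventually.of_forall fun τ => (he_norm τ).le)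
  have hf2 : Integrable (fun τ => f (τ + h)) := hfi.comp_add_right h
  have hint2 : Integrable (fun τ => e τ * f (τ + h)) :=
    hf2.bdd_mul (c := 1) he_cont.aestronglyMeasurable (Filter.Eventually.of_forall fun τ => (he_norm τ).le)
  have hth : t * h = Real.pi := by
    rw [hh]; field_simp
  -- key cancellation: e (τ + h) = - e τ
  have he_shift : ∀ τ : ℝ, e (τ + h) = -e τ := by
    intro τ
    have hthC : ((Real.pi : ℂ)) = (t : ℂ) * (h : ℂ) := by exact_mod_cast hth.symm
    have hexp : Complex.I * (t : ℂ) * ((τ + h : ℝ) : ℂ) =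
        Complex.I * (t : ℂ) * (τ : ℂ) + (Real.pi : ℂ) * Complex.I := by
      push_cast
      rw [hthC]; ring
    simp only [he]
    rw [hexp, Complex.exp_add, Complex.exp_pi_mul_I]
    ring
  have key : (∫ τ : ℝ, e τ * f τ) = -∫ τ : ℝ, e τ * f (τ + h) := by
    calc (∫ τ : ℝ, e τ * f τ) = ∫ τ : ℝ, e (τ + h) * f (τ + h) :=
          (integral_add_right_eq_self (fun τ => e τ * f τ) h).symm
      _ = ∫ τ : ℝ, -(e τ * f (τ + h)) := by
          congr 1; funext τ; rw [he_shift τ]; ring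
      _ = -∫ τ : ℝ, e τ * f (τ + h) := integral_neg _
  have hdiff : (∫ τ : ℝ, e τ * (f τ - f (τ + h))) = 2 * ∫ τ : ℝ, e τ * f τ := by
    have hsub : (∫ τ : ℝ, e τ * (f τ - f (τ + h)))
        = (∫ τ : ℝ, e τ * f τ) - ∫ τ : ℝ, e τ * f (τ + h) := by
      simp_rw [mul_sub]
      exact integral_sub hint1 hint2
    rw [hsub, key]; ring
  -- dominating functions
  obtain ⟨hA_int, hA_val⟩ := aux_near (σ := σ) (R := R) hσ0 hσ1 hR
  obtain ⟨hB_int, hB_val⟩ := aux_near (σ := σ) (R := 4 * |h|) hσ0 hσ1 (by positivity)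
  obtain ⟨hC_int, hC_val⟩ := aux_far (σ := σ) (R := R) hσ1 hR
  set GA : ℝ → ℝ := fun x => if |x| ≤ R then |x| ^ (σ - 1) else 0 with hGA
  set GB : ℝ → ℝ := fun x => if |x| ≤ 4 * |h| then |x| ^ (σ - 1) else 0 with hGB
  set GC : ℝ → ℝ := fun x => if R < |x| then |x| ^ (σ - 2) else 0 with hGC
  set G : ℝ → ℝ := fun τ => M * (GA τ + GB (τ + h) + (3/2 : ℝ) ^ (2 - σ) * |h| * GC τ) with hG
  have hGB_shift : Integrable (fun τ => GB (τ + h)) := hB_int.comp_add_right h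
  have hG_int : Integrable G := by
    have := (((hA_int.add hGB_shift).add
      (hC_int.const_mul ((3/2 : ℝ) ^ (2 - σ) * |h|))).const_mul M)
    apply this.congr
    filter_upwards with τ
    simp only [Pi.add_apply]
    rfl
  have hGA_nonneg : ∀ x, 0 ≤ GA x := by
    intro x; rw [hGA]; dsimp only; split <;> positivity
  have hGB_nonneg : ∀ x, 0 ≤ GB x := by
    intro x; rw [hGB]; dsimp only; split <;> positivity
  have hGC_nonneg : ∀ x, 0 ≤ GC x := by
    intro x; rw [hGC]; dsimp only; split <;> positivity
  -- a.e. pointwise bound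
  have hae : ∀ᵐ τ : ℝ, ‖e τ * (f τ - f (τ + h))‖ ≤ G τ := by
    have hnull : ∀ᵐ τ : ℝ, τ ∉ ({0, -h} : Set ℝ) := by
      refine measure_eq_zero_iff_ae_notMem.mp ?_
      exact Set.Finite.measure_zero (Set.toFinite _) _
    filter_upwards [hnull] with τ hτ
    have hτ0 : τ ≠ 0 := by intro hc; exact hτ (by simp [hc])
    have hτh : τ + h ≠ 0 := by
      intro hc; exact hτ (by simp [show τ = -h by linarith])
    rw [norm_mul, he_norm, one_mul]
    by_cases hcase : |τ| ≤ R
    · -- near region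
      have b1 : ‖f τ‖ ≤ M * |τ| ^ (σ - 1) := by
        exact hbd0 τ hτ0
      have b2 : ‖f (τ + h)‖ ≤ M * |τ + h| ^ (σ - 1) := by
        exact hbd0 _ hτh
      have hBτ : GB (τ + h) = |τ + h| ^ (σ - 1) := by
        rw [hGB]
        have : |τ + h| ≤ 4 * |h| := by
          calc |τ + h| ≤ |τ| + |h| := abs_add_le _ _
            _ ≤ R + |h| := by linarith
            _ = 4 * |h| := by rw [hRdef]; ring
        simp [this]
      have hAτ : GA τ = |τ| ^ (σ - 1) := by rw [hGA]; simp [hcase]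
      have hCτ : GC τ = 0 := by rw [hGC]; simp [not_lt.mpr hcase]
      calc ‖f τ - f (τ + h)‖ ≤ ‖f τ‖ + ‖f (τ + h)‖ := norm_sub_le _ _
        _ ≤ M * |τ| ^ (σ - 1) + M * |τ + h| ^ (σ - 1) := add_le_add b1 b2
        _ = G τ := by rw [hG]; dsimp only; rw [hAτ, hBτ, hCτ]; ring
    · -- far region: mean value theorem
      push_neg at hcase
      set s : Set ℝ := Set.uIcc τ (τ + h) with hs
      have hmem : ∀ x ∈ s, |x - τ| ≤ |h| := by
        intro x hx
        rcases le_total 0 h with h0 | h0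
        · rw [hs, Set.uIcc_of_le (by linarith)] at hx
          rw [abs_of_nonneg (by linarith [hx.1]), abs_of_nonneg h0]
          linarith [hx.2]
        · rw [hs, Set.uIcc_of_ge (by linarith)] at hx
          rw [abs_of_nonpos (by linarith [hx.2]), abs_of_nonpos h0]
          linarith [hx.1]
      have hlow : ∀ x ∈ s, (2/3 : ℝ) * |τ| ≤ |x| ∧ x ≠ 0 := by
        intro x hx
        have h1 : |τ| - |x| ≤ |x - τ| := by
          have := abs_sub_abs_le_abs_sub τ x
          rwa [abs_sub_comm] at this
        have h2 : |h| < |τ| / 3 := by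
          have : 3 * |h| < |τ| := by rw [← hRdef]; exact hcase
          linarith
        have h3 : (2/3 : ℝ) * |τ| ≤ |x| := by
          have := hmem x hx
          linarith
        refine ⟨h3, ?_⟩
        intro hc
        rw [hc, abs_zero] at h3
        have : 0 < |τ| := abs_pos.mpr hτ0
        linarith
      have hopen : IsOpen {τ : ℝ | τ ≠ 0} := isOpen_compl_singleton
      have hder : ∀ x ∈ s, HasDerivWithinAt f (deriv f x) s x := by
        intro x hx
        have hx0 : x ≠ 0 := (hlow x hx).2
        have : DifferentiableAt ℝ f x :=
          ((hcd.differentiableOn (by norm_num)).differentiableAt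
            (hopen.mem_nhds hx0))
        exact this.hasDerivAt.hasDerivWithinAt
      have hCbd : ∀ x ∈ s, ‖deriv f x‖ ≤ M * ((2/3 : ℝ) ^ (σ - 2) * |τ| ^ (σ - 2)) := by
        intro x hx
        obtain ⟨h3, hx0⟩ := hlow x hx
        have hb1 : ‖deriv f x‖ ≤ M * |x| ^ (σ - 2) := by
          exact hbd1 x hx0
        have hτpos : 0 < |τ| := abs_pos.mpr hτ0
        have hb2 : |x| ^ (σ - 2) ≤ ((2/3 : ℝ) * |τ|) ^ (σ - 2) :=
          Real.rpow_le_rpow_of_nonpos (by positivity) h3 (by linarith)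
        have hb3 : ((2/3 : ℝ) * |τ|) ^ (σ - 2)
            = (2/3 : ℝ) ^ (σ - 2) * |τ| ^ (σ - 2) :=
          Real.mul_rpow (by norm_num) (abs_nonneg _)
        calc ‖deriv f x‖ ≤ M * |x| ^ (σ - 2) := hb1
          _ ≤ M * ((2/3 : ℝ) ^ (σ - 2) * |τ| ^ (σ - 2)) := by
              rw [← hb3]; exact mul_le_mul_of_nonneg_left hb2 hM
      have hmvt := Convex.norm_image_sub_le_of_norm_hasDerivWithin_le hder hCbd
        (convex_uIcc τ (τ + h)) Set.left_mem_uIcc Set.right_mem_uIcc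
      have hflip : ‖f τ - f (τ + h)‖ ≤
          M * ((2/3 : ℝ) ^ (σ - 2) * |τ| ^ (σ - 2)) * |h| := by
        rw [norm_sub_rev]
        calc ‖f (τ + h) - f τ‖ ≤ M * ((2/3 : ℝ) ^ (σ - 2) * |τ| ^ (σ - 2)) * ‖τ + h - τ‖ := hmvt
          _ = M * ((2/3 : ℝ) ^ (σ - 2) * |τ| ^ (σ - 2)) * |h| := by
              rw [show τ + h - τ = h by ring, Real.norm_eq_abs]
      have hpow : (2/3 : ℝ) ^ (σ - 2) = (3/2 : ℝ) ^ (2 - σ) := by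
        rw [show (2/3 : ℝ) = ((3/2 : ℝ))⁻¹ by norm_num,
          Real.inv_rpow (by norm_num), ← Real.rpow_neg (by norm_num),
          show -(σ - 2) = 2 - σ by ring]
      have hAτ : GA τ = 0 := by rw [hGA]; simp [not_le.mpr hcase]
      have hCτ : GC τ = |τ| ^ (σ - 2) := by rw [hGC]; simp [hcase]
      calc ‖f τ - f (τ + h)‖ ≤ M * ((2/3 : ℝ) ^ (σ - 2) * |τ| ^ (σ - 2)) * |h| := hflip
        _ ≤ G τ := by
            rw [hG]; dsimp only; rw [hAτ, hCτ, hpow]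
            have := hGB_nonneg (τ + h)
            nlinarith [hGB_nonneg (τ + h), hM]
  -- put everything together
  have hbound : ‖∫ τ : ℝ, e τ * (f τ - f (τ + h))‖ ≤ ∫ τ : ℝ, G τ :=
    norm_integral_le_of_norm_le hG_int hae
  have hGval : (∫ τ : ℝ, G τ) = M * (|h| ^ σ * S) := by
    have h1 : (∫ τ : ℝ, G τ) = M * ((∫ τ : ℝ, GA τ) + (∫ τ : ℝ, GB (τ + h))
        + (3/2 : ℝ) ^ (2 - σ) * |h| * ∫ τ : ℝ, GC τ) := by
      have i1 : Integrable (fun τ : ℝ => GA τ + GB (τ + h)) := hA_int.add hGB_shift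
      have i2 : Integrable (fun τ : ℝ => (3/2 : ℝ) ^ (2 - σ) * |h| * GC τ) :=
        hC_int.const_mul _
      rw [hG]
      rw [integral_const_mul]
      congr 1
      rw [integral_add i1 i2, integral_add hA_int hGB_shift, integral_const_mul]
    have h2 : (∫ τ : ℝ, GB (τ + h)) = ∫ τ : ℝ, GB τ :=
      integral_add_right_eq_self GB h
    rw [h1, h2, hA_val, hB_val, hC_val]
    have e1 : R ^ σ = 3 ^ σ * |h| ^ σ := by
      rw [hRdef]; exact Real.mul_rpow (by norm_num) (abs_nonneg _)
    have e2 : (4 * |h|) ^ σ = 4 ^ σ * |h| ^ σ := Real.mul_rpow (by norm_num) (abs_nonneg _)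
    have e3 : R ^ (σ - 1) = 3 ^ (σ - 1) * |h| ^ (σ - 1) := by
      rw [hRdef]; exact Real.mul_rpow (by norm_num) (abs_nonneg _)
    have e4 : |h| * |h| ^ (σ - 1) = |h| ^ σ := by
      have h5 := Real.rpow_add hhpos 1 (σ - 1)
      rw [Real.rpow_one, show (1:ℝ) + (σ - 1) = σ by ring] at h5
      exact h5.symm
    rw [e1, e2, e3]
    simp only [hS]
    linear_combination (M * (3/2 : ℝ) ^ (2 - σ) * 2 * (3:ℝ) ^ (σ - 1) / (1 - σ)) * e4
  have hI0 : ‖∫ τ : ℝ, e τ * f τ‖ ≤ (1/2) * (M * (|h| ^ σ * S)) := by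
    have h2 : ‖∫ τ : ℝ, e τ * (f τ - f (τ + h))‖ = 2 * ‖∫ τ : ℝ, e τ * f τ‖ := by
      rw [hdiff, norm_mul]
      norm_num
    rw [h2, hGval] at hbound
    calc ‖∫ τ : ℝ, e τ * f τ‖ = (1/2) * (2 * ‖∫ τ : ℝ, e τ * f τ‖) := by ring
      _ ≤ (1/2) * (M * (|h| ^ σ * S)) :=
        mul_le_mul_of_nonneg_left hbound (by norm_num)
  -- final arithmetic
  have habs_pow : |h| ^ σ = Real.pi ^ σ * |t| ^ (-σ) := by
    rw [habs, Real.div_rpow Real.pi_pos.le (abs_nonneg t), Real.rpow_neg (abs_nonneg t)]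
    ring
  rw [norm_mul, Complex.norm_real, Real.norm_eq_abs, abs_of_pos (by positivity : (0:ℝ) < 1 / (2 * Real.pi))]
  calc (1 / (2 * Real.pi)) * ‖∫ τ : ℝ, e τ * f τ‖
      ≤ (1 / (2 * Real.pi)) * ((1/2) * (M * (|h| ^ σ * S))) := by
        apply mul_le_mul_of_nonneg_left hI0 (by positivity)
    _ = Real.pi ^ σ / (4 * Real.pi) * S * M * |t| ^ (-σ) := by
        rw [habs_pow]; field_simp; ring
end
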